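/- For the probability-of-error distortion and every Δ with Δ_min ≤ Δ ≤ Δ_max, the minimum defining R_A(Δ) is attained by some feasible joint pmf Q that additionally satisfies the longer Markov chain X_{A^c} — X_A — Y_A — Y_{A^c}: that is, there exists a feasible Q with E_Q[1(X ≠ Y)] ≤ Δ, I_Q(X_A ∧ Y) = R_A(Δ), and under Q both X_{A^c} — X_A — (Y_A, Y_{A^c}) and (X_A, X_{A^c}) — Y_A — Y_{A^c} are Markov chains. -/

import Mathlib

noncomputable section

/-- A probability mass function on a finite type. -/
def IsPMF {T : Type*} [Fintype T] (p : T → ℝ) : Prop :=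
  (∀ t, 0 ≤ p t) ∧ ∑ t, p t = 1

/-- Mutual information of a joint pmf `Q` on a product of two finite types;
terms with `Q p = 0` vanish since `0 * log _ = 0`. -/
def mutInfo {α β : Type*} [Fintype α] [Fintype β] (Q : α × β → ℝ) : ℝ :=
  ∑ p : α × β, Q p * Real.log (Q p / ((∑ b, Q (p.1, b)) * (∑ a, Q (a, p.2))))

variable {XA XAc Y : Type*} [Fintype XA] [Fintype XAc] [Fintype Y]

/-- The `𝒳_A`-marginal of `P`. -/
def margXA (P : XA × XAc → ℝ) (xa : XA) : ℝ := ∑ x', P (xa, x')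

/-- Conditional pmf `P_{X_{A^c}|X_A}(x'|xa)`. -/
def condP (P : XA × XAc → ℝ) (x' : XAc) (xa : XA) : ℝ := P (xa, x') / margXA P xa

/-- The modified distortion measure `d_A`. -/
def dA (P : XA × XAc → ℝ) (d : XA × XAc → Y → ℝ) (xa : XA) (y : Y) : ℝ :=
  ∑ x', condP P x' xa * d (xa, x') y

/-- Feasible joint pmfs: a pmf whose `(𝒳_A × 𝒳_{A^c})`-marginal equals `P` and
satisfying the Markov chain `X_{A^c} — X_A — Y`, i.e.
`Q(x_A,x_{A^c},y) ⬝ Q_{X_A}(x_A) = P(x_A,x_{A^c}) ⬝ Q_{X_A Y}(x_A,y)`. -/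
def Feasible (P : XA × XAc → ℝ) (Q : (XA × XAc) × Y → ℝ) : Prop :=
  IsPMF Q ∧ (∀ x, ∑ y, Q (x, y) = P x) ∧
    ∀ xa x' y, Q ((xa, x'), y) * (∑ x'', ∑ y', Q ((xa, x''), y')) =
      P (xa, x') * (∑ x'', Q ((xa, x''), y))

/-- Expected distortion of `Q`. -/
def expDist (d : XA × XAc → Y → ℝ) (Q : (XA × XAc) × Y → ℝ) : ℝ :=
  ∑ p : (XA × XAc) × Y, Q p * d p.1 p.2

/-- Marginal of `Q` on `(X_A, Y)`. -/
def margAY (Q : (XA × XAc) × Y → ℝ) : XA × Y → ℝ :=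
  fun p => ∑ x', Q ((p.1, x'), p.2)

variable [DecidableEq XA] [DecidableEq XAc]

/-- The probability-of-error distortion measure on `𝒴 = 𝒳_A × 𝒳_{A^c}`. -/
def dErr : XA × XAc → XA × XAc → ℝ := fun x y => if x = y then 0 else 1

/-- `α(x_A) = max_{x' ∈ 𝒳_{A^c}} P_{X_{A^c}|X_A}(x'|x_A)`. -/
def alphaF [Nonempty XAc] (P : XA × XAc → ℝ) (xa : XA) : ℝ :=
  Finset.univ.sup' Finset.univ_nonempty (fun x' => condP P x' xa)

/-- The fixed-set sampling rate distortion function `R_A(Δ)` for the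
probability-of-error distortion. -/
def RAerr (P : XA × XAc → ℝ) (Δ : ℝ) : ℝ :=
  sInf {r | ∃ Q : (XA × XAc) × (XA × XAc) → ℝ,
    Feasible P Q ∧ expDist dErr Q ≤ Δ ∧ mutInfo (margAY Q) = r}


open Finset in
/-- The log-sum inequality, from Jensen's inequality for `x ↦ x * log x`. -/
lemma log_sum_ineq {ι : Type*} [Fintype ι] (a b : ι → ℝ)
    (ha : ∀ i, 0 ≤ a i) (hb : ∀ i, 0 ≤ b i) (hab : ∀ i, b i = 0 → a i = 0) :
    (∑ i, a i) * Real.log ((∑ i, a i) / (∑ i, b i)) ≤ ∑ i, a i * Real.log (a i / b i) := by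
  by_cases hB : (∑ i, b i) = 0
  · have hb0 : ∀ i, b i = 0 := by
      intro i
      have h1 := Finset.single_le_sum (f := b) (fun j _ => hb j) (Finset.mem_univ i)
      linarith [hb i]
    have ha0 : ∀ i, a i = 0 := fun i => hab i (hb0 i)
    simp [ha0]
  · have hBpos : 0 < ∑ i, b i := lt_of_le_of_ne (Finset.sum_nonneg fun i _ => hb i) (Ne.symm hB)
    set B := ∑ i, b i with hBdef
    set A := ∑ i, a i with hAdef
    have key := Real.convexOn_mul_log.map_sum_le (t := Finset.univ)
      (w := fun i => b i / B) (p := fun i => a i / b i)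
      (fun i _ => div_nonneg (hb i) hBpos.le)
      (by rw [← Finset.sum_div]; exact div_self hB)
      (fun i _ => Set.mem_Ici.mpr (div_nonneg (ha i) (hb i)))
    simp only [smul_eq_mul] at key
    have hsum : ∑ i, b i / B * (a i / b i) = A / B := by
      have h1 : ∀ i ∈ Finset.univ, b i / B * (a i / b i) = a i / B := by
        intro i _
        rcases eq_or_ne (b i) 0 with h | h
        · simp [h, hab i h]
        · field_simp
      rw [Finset.sum_congr rfl h1, ← Finset.sum_div, hAdef]
    rw [hsum] at key
    have h2 : ∀ i ∈ Finset.univ, b i / B * (a i / b i * Real.log (a i / b i))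
        = a i * Real.log (a i / b i) / B := by
      intro i _
      rcases eq_or_ne (b i) 0 with h | h
      · simp [h, hab i h]
      · field_simp
    rw [Finset.sum_congr rfl h2, ← Finset.sum_div] at key
    have hmul := mul_le_mul_of_nonneg_left key hBpos.le
    calc A * Real.log (A / B) = B * (A / B * Real.log (A / B)) := by field_simp
      _ ≤ B * ((∑ i, a i * Real.log (a i / b i)) / B) := hmul
      _ = ∑ i, a i * Real.log (a i / b i) := by field_simp

lemma sum_prod3 {σ τ₁ τ₂ : Type*} [Fintype σ] [Fintype τ₁] [Fintype τ₂]
    (f : σ × (τ₁ × τ₂) → ℝ) :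
    ∑ p : σ × (τ₁ × τ₂), f p = ∑ s, ∑ u, ∑ v, f (s, (u, v)) := by
  rw [Fintype.sum_prod_type]
  exact Finset.sum_congr rfl fun s _ => Fintype.sum_prod_type _

/-- Data processing: merging the second component of the output does not
increase mutual information. -/
lemma mutInfo_group {σ τ₁ τ₂ : Type*} [Fintype σ] [Fintype τ₁] [Fintype τ₂]
    (M : σ × (τ₁ × τ₂) → ℝ) (hM : ∀ p, 0 ≤ M p) :
    mutInfo (fun q : σ × τ₁ => ∑ v, M (q.1, (q.2, v))) ≤ mutInfo M := by
  have L : mutInfo M = ∑ s, ∑ u, ∑ v, M (s, (u, v)) *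
      Real.log (M (s, (u, v)) / ((∑ y, M (s, y)) * (∑ a, M (a, (u, v))))) :=
    sum_prod3 _
  have R : mutInfo (fun q : σ × τ₁ => ∑ v, M (q.1, (q.2, v)))
      = ∑ s, ∑ u, (∑ v, M (s, (u, v))) *
        Real.log ((∑ v, M (s, (u, v))) /
          ((∑ b : τ₁, ∑ v, M (s, (b, v))) * (∑ a, ∑ v, M (a, (u, v))))) :=
    Fintype.sum_prod_type _
  rw [L, R]
  refine Finset.sum_le_sum fun s _ => Finset.sum_le_sum fun u _ => ?_
  have e1 : (∑ b : τ₁, ∑ v, M (s, (b, v))) = ∑ y, M (s, y) :=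
    (Fintype.sum_prod_type (f := fun y : τ₁ × τ₂ => M (s, y))).symm
  have e2 : (∑ a, ∑ v, M (a, (u, v))) = ∑ v, ∑ a, M (a, (u, v)) := Finset.sum_comm
  rw [e1, e2]
  have hb : ∀ v, 0 ≤ (∑ y, M (s, y)) * (∑ a, M (a, (u, v))) := fun v =>
    mul_nonneg (Finset.sum_nonneg fun y _ => hM _) (Finset.sum_nonneg fun a _ => hM _)
  have hab : ∀ v, (∑ y, M (s, y)) * (∑ a, M (a, (u, v))) = 0 → M (s, (u, v)) = 0 := by
    intro v h
    rcases mul_eq_zero.mp h with h | h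
    · have h1 := Finset.single_le_sum (f := fun y => M (s, y)) (fun y _ => hM _)
        (Finset.mem_univ (u, v))
      have h2 := hM (s, (u, v)); linarith
    · have h1 := Finset.single_le_sum (f := fun a => M (a, (u, v))) (fun a _ => hM _)
        (Finset.mem_univ s)
      have h2 := hM (s, (u, v)); linarith
  have key := log_sum_ineq (fun v => M (s, (u, v)))
    (fun v => (∑ y, M (s, y)) * (∑ a, M (a, (u, v)))) (fun v => hM _) hb hab
  calc (∑ v, M (s, (u, v))) * Real.log ((∑ v, M (s, (u, v))) /
        ((∑ y, M (s, y)) * (∑ v, ∑ a, M (a, (u, v)))))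
      = (∑ v, M (s, (u, v))) * Real.log ((∑ v, M (s, (u, v))) /
        (∑ v, (∑ y, M (s, y)) * (∑ a, M (a, (u, v))))) := by rw [← Finset.mul_sum]
    _ ≤ _ := key

/-- Mutual information of a deterministically extended output matrix. -/
lemma mutInfo_det {σ τ₁ τ₂ : Type*} [Fintype σ] [Fintype τ₁] [Fintype τ₂]
    [DecidableEq τ₂] (N : σ × τ₁ → ℝ) (φ : τ₁ → τ₂) :
    mutInfo (fun p : σ × (τ₁ × τ₂) =>
      if p.2.2 = φ p.2.1 then N (p.1, p.2.1) else 0) = mutInfo N := by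
  set Md : σ × (τ₁ × τ₂) → ℝ :=
    fun p => if p.2.2 = φ p.2.1 then N (p.1, p.2.1) else 0 with hMd
  have hm1 : ∀ s : σ, (∑ y : τ₁ × τ₂, Md (s, y)) = ∑ u, N (s, u) := by
    intro s
    rw [Fintype.sum_prod_type]
    exact Finset.sum_congr rfl fun u _ => by simp [hMd]
  have L : mutInfo Md = ∑ s, ∑ u, ∑ v, Md (s, (u, v)) *
      Real.log (Md (s, (u, v)) / ((∑ y, Md (s, y)) * (∑ a, Md (a, (u, v))))) :=
    sum_prod3 _
  have R : mutInfo N = ∑ s, ∑ u, N (s, u) *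
      Real.log (N (s, u) / ((∑ b, N (s, b)) * (∑ a, N (a, u)))) :=
    Fintype.sum_prod_type _
  rw [L, R]
  refine Finset.sum_congr rfl fun s _ => Finset.sum_congr rfl fun u _ => ?_
  rw [Finset.sum_eq_single (φ u)]
  · have hMd2 : ∀ a : σ, Md (a, (u, φ u)) = N (a, u) := fun a => by simp [hMd]
    simp only [hMd2]
    rw [hm1 s]
  · intro v _ hv
    have : Md (s, (u, v)) = 0 := by simp [hMd, hv]
    rw [this, zero_mul]
  · intro h; exact absurd (Finset.mem_univ _) h

/-- Decomposition of mutual information into entropy-like sums (for continuity). -/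
lemma mutInfo_eq_phi {α β : Type*} [Fintype α] [Fintype β] (M : α × β → ℝ)
    (hM : ∀ p, 0 ≤ M p) :
    mutInfo M = (∑ p : α × β, M p * Real.log (M p))
      - (∑ s, (∑ b, M (s, b)) * Real.log (∑ b, M (s, b)))
      - (∑ t, (∑ a, M (a, t)) * Real.log (∑ a, M (a, t))) := by
  have hterm : ∀ p : α × β,
      M p * Real.log (M p / ((∑ b, M (p.1, b)) * (∑ a, M (a, p.2))))
      = M p * Real.log (M p) - M p * Real.log (∑ b, M (p.1, b))
        - M p * Real.log (∑ a, M (a, p.2)) := by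
    intro p
    rcases eq_or_ne (M p) 0 with h | h
    · simp [h]
    · have hMp : 0 < M p := lt_of_le_of_ne (hM p) (Ne.symm h)
      have hr : 0 < ∑ b, M (p.1, b) := by
        have h1 := Finset.single_le_sum (f := fun b => M (p.1, b)) (fun b _ => hM _)
          (Finset.mem_univ p.2)
        simp only [Prod.mk.eta] at h1
        linarith
      have hc : 0 < ∑ a, M (a, p.2) := by
        have h1 := Finset.single_le_sum (f := fun a => M (a, p.2)) (fun a _ => hM _)
          (Finset.mem_univ p.1)
        simp only [Prod.mk.eta] at h1
        linarith
      rw [Real.log_div h (by positivity), Real.log_mul hr.ne' hc.ne']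
      ring
  have h1 : mutInfo M = ∑ p : α × β, (M p * Real.log (M p)
      - M p * Real.log (∑ b, M (p.1, b)) - M p * Real.log (∑ a, M (a, p.2))) :=
    Finset.sum_congr rfl fun p _ => hterm p
  rw [h1, Finset.sum_sub_distrib, Finset.sum_sub_distrib]
  congr 1
  · congr 1
    rw [Fintype.sum_prod_type]
    exact Finset.sum_congr rfl fun s _ => by dsimp only; rw [← Finset.sum_mul]
  · rw [Fintype.sum_prod_type_right]
    exact Finset.sum_congr rfl fun t _ => by dsimp only; rw [← Finset.sum_mul]


section AuxContext

variable [Nonempty XAc]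

/-- A maximizer of `x' ↦ condP P x' xa`. -/
def phiF (P : XA × XAc → ℝ) (xa : XA) : XAc :=
  Classical.choose (Finset.exists_mem_eq_sup' Finset.univ_nonempty
    (fun x' => condP P x' xa))

lemma alphaF_eq_phiF (P : XA × XAc → ℝ) (xa : XA) :
    alphaF P xa = condP P (phiF P xa) xa :=
  (Classical.choose_spec (Finset.exists_mem_eq_sup' Finset.univ_nonempty
    (fun x' => condP P x' xa))).2

lemma condP_le_alphaF (P : XA × XAc → ℝ) (x' : XAc) (xa : XA) :
    condP P x' xa ≤ alphaF P xa := by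
  unfold alphaF
  exact Finset.le_sup' (fun x' => condP P x' xa) (Finset.mem_univ x')

lemma margXA_pos (P : XA × XAc → ℝ) (hfull : ∀ x, 0 < P x) (xa : XA) :
    0 < margXA P xa :=
  Finset.sum_pos (fun x' _ => hfull (xa, x')) Finset.univ_nonempty

lemma P_le_phiF (P : XA × XAc → ℝ) (hfull : ∀ x, 0 < P x) (xa : XA) (x' : XAc) :
    P (xa, x') ≤ P (xa, phiF P xa) := by
  have h := condP_le_alphaF P x' xa
  rw [alphaF_eq_phiF] at h
  unfold condP at h
  have hm := margXA_pos P hfull xa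
  have h2 := mul_le_mul_of_nonneg_right h hm.le
  rwa [div_mul_cancel₀ _ hm.ne', div_mul_cancel₀ _ hm.ne'] at h2

/-- The deterministic modification of `Q`: force `Y_{A^c} = phiF P Y_A`. -/
def detQ (P : XA × XAc → ℝ) (Q : (XA × XAc) × (XA × XAc) → ℝ) :
    (XA × XAc) × (XA × XAc) → ℝ :=
  fun p => if p.2.2 = phiF P p.2.1 then ∑ y2, Q (p.1, (p.2.1, y2)) else 0

lemma detQ_sum_yac (P : XA × XAc → ℝ) (Q : (XA × XAc) × (XA × XAc) → ℝ)
    (x : XA × XAc) (ya : XA) :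
    ∑ yac, detQ P Q (x, (ya, yac)) = ∑ y2, Q (x, (ya, y2)) := by
  simp [detQ]

lemma detQ_sum_y (P : XA × XAc → ℝ) (Q : (XA × XAc) × (XA × XAc) → ℝ)
    (x : XA × XAc) :
    ∑ y, detQ P Q (x, y) = ∑ y, Q (x, y) :=
  calc ∑ y : XA × XAc, detQ P Q (x, y)
      = ∑ ya, ∑ yac, detQ P Q (x, (ya, yac)) := Fintype.sum_prod_type _
    _ = ∑ ya, ∑ y2, Q (x, (ya, y2)) :=
        Finset.sum_congr rfl fun ya _ => detQ_sum_yac P Q x ya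
    _ = ∑ y, Q (x, y) := (Fintype.sum_prod_type (f := fun y : XA × XAc => Q (x, y))).symm

lemma feasible_detQ (P : XA × XAc → ℝ) (Q : (XA × XAc) × (XA × XAc) → ℝ)
    (hQ : Feasible P Q) : Feasible P (detQ P Q) := by
  obtain ⟨⟨hpos, hsum⟩, hmarg, hmarkov⟩ := hQ
  have hmarg' : ∀ x, ∑ y, detQ P Q (x, y) = P x := fun x => by
    rw [detQ_sum_y]; exact hmarg x
  refine ⟨⟨fun p => ?_, ?_⟩, hmarg', ?_⟩
  · unfold detQ
    split
    · exact Finset.sum_nonneg fun y2 _ => hpos _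
    · exact le_refl 0
  · rw [Fintype.sum_prod_type]
    rw [Finset.sum_congr rfl fun x _ => hmarg' x]
    rw [← Finset.sum_congr rfl fun x (_ : x ∈ Finset.univ) => hmarg x]
    rw [← Fintype.sum_prod_type]
    exact hsum
  · intro xa x' y
    have htot : (∑ x'', ∑ y', detQ P Q ((xa, x''), y')) = ∑ x'', ∑ y', Q ((xa, x''), y') :=
      Finset.sum_congr rfl fun x'' _ => detQ_sum_y P Q (xa, x'')
    rw [htot]
    obtain ⟨ya, yac⟩ := y
    by_cases hc : yac = phiF P ya
    · subst hc
      have hL : detQ P Q ((xa, x'), (ya, phiF P ya)) = ∑ y2, Q ((xa, x'), (ya, y2)) := by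
        simp [detQ]
      have hR : ∀ x'' : XAc, detQ P Q ((xa, x''), (ya, phiF P ya))
          = ∑ y2, Q ((xa, x''), (ya, y2)) := fun x'' => by simp [detQ]
      rw [hL, Finset.sum_congr rfl fun x'' _ => hR x'']
      rw [Finset.sum_mul]
      rw [Finset.sum_congr rfl fun y2 (_ : y2 ∈ Finset.univ) => hmarkov xa x' (ya, y2)]
      rw [← Finset.mul_sum, Finset.sum_comm]
    · have hL : detQ P Q ((xa, x'), (ya, yac)) = 0 := by simp [detQ, hc]
      have hR : ∀ x'' : XAc, detQ P Q ((xa, x''), (ya, yac)) = 0 := fun x'' => by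
        simp [detQ, hc]
      rw [hL, Finset.sum_congr rfl fun x'' _ => hR x'']
      simp

lemma expDist_dErr_eq (Q : (XA × XAc) × (XA × XAc) → ℝ) (hQ : IsPMF Q) :
    expDist dErr Q = 1 - ∑ x : XA × XAc, Q (x, x) := by
  have hterm : ∀ p : (XA × XAc) × (XA × XAc),
      Q p * dErr p.1 p.2 = Q p - (if p.1 = p.2 then Q p else 0) := by
    intro p
    by_cases h : p.1 = p.2 <;> simp [dErr, h]
  rw [expDist, Finset.sum_congr rfl fun p _ => hterm p, Finset.sum_sub_distrib, hQ.2]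
  congr 1
  rw [Fintype.sum_prod_type]
  exact Finset.sum_congr rfl fun x _ => by simp

lemma diag_detQ (P : XA × XAc → ℝ) (Q : (XA × XAc) × (XA × XAc) → ℝ) :
    ∑ x : XA × XAc, detQ P Q (x, x) = ∑ xa, ∑ y2, Q ((xa, phiF P xa), (xa, y2)) := by
  rw [Fintype.sum_prod_type]
  refine Finset.sum_congr rfl fun xa _ => ?_
  have : ∀ x' : XAc, detQ P Q ((xa, x'), (xa, x'))
      = if x' = phiF P xa then ∑ y2, Q ((xa, x'), (xa, y2)) else 0 := fun x' => rfl
  rw [Finset.sum_congr rfl fun x' _ => this x']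
  simp

lemma diag_le (P : XA × XAc → ℝ) (hfull : ∀ x, 0 < P x)
    (Q : (XA × XAc) × (XA × XAc) → ℝ) (hQ : Feasible P Q) :
    ∑ x : XA × XAc, Q (x, x) ≤ ∑ xa, ∑ y2, Q ((xa, phiF P xa), (xa, y2)) := by
  obtain ⟨⟨hpos, hsum⟩, hmarg, hmarkov⟩ := hQ
  rw [Fintype.sum_prod_type]
  refine Finset.sum_le_sum fun xa _ => ?_
  have hm := margXA_pos P hfull xa
  have htot : (∑ x'', ∑ y', Q ((xa, x''), y')) = margXA P xa := by
    rw [Finset.sum_congr rfl fun x'' (_ : x'' ∈ Finset.univ) => hmarg (xa, x'')]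
    rfl
  have hmk : ∀ (x' : XAc) (y : XA × XAc),
      Q ((xa, x'), y) * margXA P xa = P (xa, x') * ∑ x'', Q ((xa, x''), y) := by
    intro x' y
    rw [← htot]
    exact hmarkov xa x' y
  have hSnn : ∀ y : XA × XAc, 0 ≤ ∑ x'', Q ((xa, x''), y) := fun y =>
    Finset.sum_nonneg fun x'' _ => hpos _
  have key : (∑ x', Q ((xa, x'), (xa, x'))) * margXA P xa
      ≤ (∑ y2, Q ((xa, phiF P xa), (xa, y2))) * margXA P xa := by
    rw [Finset.sum_mul, Finset.sum_mul]
    calc ∑ x', Q ((xa, x'), (xa, x')) * margXA P xa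
        = ∑ x', P (xa, x') * ∑ x'', Q ((xa, x''), (xa, x')) :=
          Finset.sum_congr rfl fun x' _ => hmk x' (xa, x')
      _ ≤ ∑ x', P (xa, phiF P xa) * ∑ x'', Q ((xa, x''), (xa, x')) :=
          Finset.sum_le_sum fun x' _ =>
            mul_le_mul_of_nonneg_right (P_le_phiF P hfull xa x') (hSnn _)
      _ = ∑ y2, Q ((xa, phiF P xa), (xa, y2)) * margXA P xa :=
          (Finset.sum_congr rfl fun y2 _ => (hmk (phiF P xa) (xa, y2)).symm)
  exact le_of_mul_le_mul_right key hm

lemma mutInfo_detQ_le (P : XA × XAc → ℝ) (Q : (XA × XAc) × (XA × XAc) → ℝ)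
    (hpos : ∀ p, 0 ≤ Q p) :
    mutInfo (margAY (detQ P Q)) ≤ mutInfo (margAY Q) := by
  have hMnn : ∀ p : XA × (XA × XAc), 0 ≤ margAY Q p := fun p =>
    Finset.sum_nonneg fun x' _ => hpos _
  have hmarg : margAY (detQ P Q) = fun p : XA × (XA × XAc) =>
      if p.2.2 = phiF P p.2.1 then
        ∑ v, margAY Q (p.1, (p.2.1, v)) else 0 := by
    funext p
    show (∑ x', detQ P Q ((p.1, x'), p.2)) = _
    by_cases hc : p.2.2 = phiF P p.2.1
    · rw [if_pos hc]
      have : ∀ x' : XAc, detQ P Q ((p.1, x'), p.2)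
          = ∑ y2, Q ((p.1, x'), (p.2.1, y2)) := by
        intro x'
        unfold detQ
        rw [if_pos hc]
      rw [Finset.sum_congr rfl fun x' _ => this x']
      rw [Finset.sum_comm]
      rfl
    · rw [if_neg hc]
      have : ∀ x' : XAc, detQ P Q ((p.1, x'), p.2) = 0 := by
        intro x'
        unfold detQ
        rw [if_neg hc]
      rw [Finset.sum_congr rfl fun x' _ => this x']
      simp
  rw [hmarg]
  calc mutInfo (fun p : XA × (XA × XAc) =>
        if p.2.2 = phiF P p.2.1 then ∑ v, margAY Q (p.1, (p.2.1, v)) else 0)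
      = mutInfo (fun q : XA × XA => ∑ v, margAY Q (q.1, (q.2, v))) :=
        mutInfo_det (fun q : XA × XA => ∑ v, margAY Q (q.1, (q.2, v))) (phiF P)
    _ ≤ mutInfo (margAY Q) := mutInfo_group (margAY Q) hMnn

end AuxContext

/-- for the probability-of-error distortion and `Δ_min ≤ Δ ≤ Δ_max`, the
minimum defining `R_A(Δ)` is attained by a feasible pmf satisfying the longer Markov
chain `X_{A^c} — X_A — Y_A — Y_{A^c}`. -/
theorem stmt7 [Nonempty XA] [Nonempty XAc]
    (P : XA × XAc → ℝ) (hP : IsPMF P) (hfull : ∀ x, 0 < P x) (Δ : ℝ)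
    (hmin : 1 - ∑ xa, margXA P xa * alphaF P xa ≤ Δ)
    (hmax : Δ ≤ 1 - Finset.univ.sup' Finset.univ_nonempty P) :
    ∃ Q : (XA × XAc) × (XA × XAc) → ℝ,
      Feasible P Q ∧ expDist dErr Q ≤ Δ ∧ mutInfo (margAY Q) = RAerr P Δ ∧
      (∀ (x : XA × XAc) (ya : XA) (yac : XAc),
        Q (x, (ya, yac)) * (∑ x'' : XA × XAc, ∑ y2, Q (x'', (ya, y2))) =
          (∑ y2, Q (x, (ya, y2))) * (∑ x'' : XA × XAc, Q (x'', (ya, yac)))) := by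
  classical
  set S : Set (((XA × XAc) × (XA × XAc)) → ℝ) :=
    {Q | Feasible P Q ∧ expDist dErr Q ≤ Δ} with hS
  -- the baseline pmf  Y = (X_A, phiF P X_A)
  set Q0 : ((XA × XAc) × (XA × XAc)) → ℝ :=
    fun p => if p.2 = (p.1.1, phiF P p.1.1) then P p.1 else 0 with hQ0
  have hQ0marg : ∀ x : XA × XAc, ∑ y, Q0 (x, y) = P x := by
    intro x
    simp [hQ0]
  have hQ0feas : Feasible P Q0 := by
    refine ⟨⟨fun p => ?_, ?_⟩, hQ0marg, ?_⟩
    · simp only [hQ0]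
      split
      · exact (hP.1 _)
      · exact le_refl 0
    · rw [Fintype.sum_prod_type, Finset.sum_congr rfl fun x _ => hQ0marg x]
      exact hP.2
    · intro xa x' y
      have htot : (∑ x'' : XAc, ∑ y', Q0 ((xa, x''), y')) = margXA P xa := by
        rw [Finset.sum_congr rfl fun x'' (_ : x'' ∈ Finset.univ) => hQ0marg (xa, x'')]
        rfl
      rw [htot]
      by_cases hc : y = (xa, phiF P xa)
      · have hL : Q0 ((xa, x'), y) = P (xa, x') := by simp [hQ0, hc]
        have hR : ∀ x'' : XAc, Q0 ((xa, x''), y) = P (xa, x'') := fun x'' => by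
          simp [hQ0, hc]
        rw [hL, Finset.sum_congr rfl fun x'' _ => hR x'']
        rfl
      · have hL : Q0 ((xa, x'), y) = 0 := by simp [hQ0, hc]
        have hR : ∀ x'' : XAc, Q0 ((xa, x''), y) = 0 := fun x'' => by simp [hQ0, hc]
        rw [hL, Finset.sum_congr rfl fun x'' _ => hR x'']
        simp
  have hQ0dist : expDist dErr Q0 ≤ Δ := by
    rw [expDist_dErr_eq Q0 hQ0feas.1]
    have hdiag : ∑ x : XA × XAc, Q0 (x, x) = ∑ xa, P (xa, phiF P xa) := by
      rw [Fintype.sum_prod_type]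
      refine Finset.sum_congr rfl fun xa _ => ?_
      have h1 : ∀ x' : XAc, Q0 ((xa, x'), (xa, x'))
          = if x' = phiF P xa then P (xa, x') else 0 := by
        intro x'
        by_cases h : x' = phiF P xa <;> simp [hQ0, h]
      rw [Finset.sum_congr rfl fun x' _ => h1 x']
      simp
    rw [hdiag]
    have he : ∀ xa, margXA P xa * alphaF P xa = P (xa, phiF P xa) := by
      intro xa
      rw [alphaF_eq_phiF]
      unfold condP
      rw [mul_div_cancel₀ _ (margXA_pos P hfull xa).ne']
    calc 1 - ∑ xa, P (xa, phiF P xa)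
        = 1 - ∑ xa, margXA P xa * alphaF P xa := by
          rw [Finset.sum_congr rfl fun xa _ => (he xa).symm]
      _ ≤ Δ := hmin
  have hQ0S : Q0 ∈ S := ⟨hQ0feas, hQ0dist⟩
  -- compactness of the constraint set
  have hsub : S ⊆ Set.Icc (0 : ((XA × XAc) × (XA × XAc)) → ℝ) 1 := by
    rintro Q ⟨⟨⟨hpos, hsum⟩, -, -⟩, -⟩
    refine ⟨Pi.le_def.mpr fun p => hpos p, Pi.le_def.mpr fun p => ?_⟩
    have h1 := Finset.single_le_sum (f := Q) (fun t _ => hpos t) (Finset.mem_univ p)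
    rw [hsum] at h1
    simpa using h1
  have hclosed : IsClosed S := by
    have h1 : IsClosed {Q : ((XA × XAc) × (XA × XAc)) → ℝ | ∀ t, 0 ≤ Q t} := by
      have he : {Q : ((XA × XAc) × (XA × XAc)) → ℝ | ∀ t, 0 ≤ Q t}
          = ⋂ t, {Q | 0 ≤ Q t} := by
        ext Q; simp
      rw [he]
      exact isClosed_iInter fun t => isClosed_le continuous_const (continuous_apply t)
    have h2 : IsClosed {Q : ((XA × XAc) × (XA × XAc)) → ℝ | ∑ t, Q t = 1} :=
      isClosed_eq (continuous_finset_sum _ fun t _ => continuous_apply t) continuous_const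
    have h3 : IsClosed {Q : ((XA × XAc) × (XA × XAc)) → ℝ | ∀ x, ∑ y, Q (x, y) = P x} := by
      have he : {Q : ((XA × XAc) × (XA × XAc)) → ℝ | ∀ x, ∑ y, Q (x, y) = P x}
          = ⋂ x, {Q | ∑ y, Q (x, y) = P x} := by
        ext Q; simp
      rw [he]
      exact isClosed_iInter fun x => isClosed_eq
        (continuous_finset_sum _ fun y _ => continuous_apply (x, y)) continuous_const
    have h4 : IsClosed {Q : ((XA × XAc) × (XA × XAc)) → ℝ |
        ∀ xa x' y, Q ((xa, x'), y) * (∑ x'', ∑ y', Q ((xa, x''), y'))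
          = P (xa, x') * (∑ x'', Q ((xa, x''), y))} := by
      have he : {Q : ((XA × XAc) × (XA × XAc)) → ℝ |
          ∀ xa x' y, Q ((xa, x'), y) * (∑ x'', ∑ y', Q ((xa, x''), y'))
            = P (xa, x') * (∑ x'', Q ((xa, x''), y))}
          = ⋂ xa, ⋂ x', ⋂ y, {Q | Q ((xa, x'), y) * (∑ x'', ∑ y', Q ((xa, x''), y'))
            = P (xa, x') * (∑ x'', Q ((xa, x''), y))} := by
        ext Q; simp
      rw [he]
      refine isClosed_iInter fun xa => isClosed_iInter fun x' => isClosed_iInter fun y => ?_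
      refine isClosed_eq (Continuous.mul (continuous_apply _) ?_)
        (Continuous.mul continuous_const ?_)
      · exact continuous_finset_sum _ fun x'' _ =>
          continuous_finset_sum _ fun y' _ => continuous_apply _
      · exact continuous_finset_sum _ fun x'' _ => continuous_apply _
    have h5 : IsClosed {Q : ((XA × XAc) × (XA × XAc)) → ℝ | expDist dErr Q ≤ Δ} :=
      isClosed_le (continuous_finset_sum _ fun p _ =>
        (continuous_apply p).mul continuous_const) continuous_const
    have hSeq : S = ({Q : ((XA × XAc) × (XA × XAc)) → ℝ | ∀ t, 0 ≤ Q t}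
        ∩ {Q | ∑ t, Q t = 1} ∩ {Q | ∀ x, ∑ y, Q (x, y) = P x}
        ∩ {Q | ∀ xa x' y, Q ((xa, x'), y) * (∑ x'', ∑ y', Q ((xa, x''), y'))
            = P (xa, x') * (∑ x'', Q ((xa, x''), y))}
        ∩ {Q | expDist dErr Q ≤ Δ}) := by
      ext Q
      constructor
      · rintro ⟨⟨⟨ha, hb⟩, hc, hd⟩, he2⟩
        exact ⟨⟨⟨⟨ha, hb⟩, hc⟩, hd⟩, he2⟩
      · rintro ⟨⟨⟨⟨ha, hb⟩, hc⟩, hd⟩, he2⟩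
        exact ⟨⟨⟨ha, hb⟩, hc, hd⟩, he2⟩
    rw [hSeq]
    exact ((((h1.inter h2).inter h3).inter h4).inter h5)
  have hcompact : IsCompact S :=
    IsCompact.of_isClosed_subset isCompact_Icc hclosed hsub
  -- continuity of the objective on S
  set F : (((XA × XAc) × (XA × XAc)) → ℝ) → ℝ := fun Q =>
    (∑ p : XA × (XA × XAc), margAY Q p * Real.log (margAY Q p))
      - (∑ s : XA, (∑ b, margAY Q (s, b)) * Real.log (∑ b, margAY Q (s, b)))
      - (∑ t : XA × XAc, (∑ a, margAY Q (a, t)) * Real.log (∑ a, margAY Q (a, t)))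
    with hF
  have hcM : ∀ p : XA × (XA × XAc),
      Continuous fun Q : ((XA × XAc) × (XA × XAc)) → ℝ => margAY Q p := fun p =>
    continuous_finset_sum _ fun x' _ => continuous_apply ((p.1, x'), p.2)
  have hFc : Continuous F := by
    refine Continuous.sub (Continuous.sub ?_ ?_) ?_
    · exact continuous_finset_sum _ fun p _ => Real.continuous_mul_log.comp (hcM p)
    · exact continuous_finset_sum _ fun s _ =>
        Real.continuous_mul_log.comp (continuous_finset_sum _ fun b _ => hcM (s, b))
    · exact continuous_finset_sum _ fun t _ =>
        Real.continuous_mul_log.comp (continuous_finset_sum _ fun a _ => hcM (a, t))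
  have hfeq : Set.EqOn (fun Q => mutInfo (margAY Q)) F S := by
    intro Q hQ
    exact mutInfo_eq_phi (margAY Q)
      (fun p => Finset.sum_nonneg fun x' _ => hQ.1.1.1 _)
  have hcont : ContinuousOn (fun Q => mutInfo (margAY Q)) S :=
    ContinuousOn.congr hFc.continuousOn hfeq
  -- a minimizer
  obtain ⟨Qm, hQmS, hQmmin⟩ := hcompact.exists_isMinOn ⟨Q0, hQ0S⟩ hcont
  have hQmfeas : Feasible P Qm := hQmS.1
  have hfeas' : Feasible P (detQ P Qm) := feasible_detQ P Qm hQmfeas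
  have hdist' : expDist dErr (detQ P Qm) ≤ Δ := by
    rw [expDist_dErr_eq _ hfeas'.1, diag_detQ]
    have h1 := diag_le P hfull Qm hQmfeas
    have h2 : expDist dErr Qm = 1 - ∑ x : XA × XAc, Qm (x, x) :=
      expDist_dErr_eq _ hQmfeas.1
    have h3 : expDist dErr Qm ≤ Δ := hQmS.2
    linarith
  have hle : mutInfo (margAY (detQ P Qm)) ≤ mutInfo (margAY Qm) :=
    mutInfo_detQ_le P Qm hQmfeas.1.1
  have hlb : ∀ r ∈ {r | ∃ Q : (XA × XAc) × (XA × XAc) → ℝ,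
      Feasible P Q ∧ expDist dErr Q ≤ Δ ∧ mutInfo (margAY Q) = r},
      mutInfo (margAY (detQ P Qm)) ≤ r := by
    rintro r ⟨Q2, hf2, hd2, rfl⟩
    exact hle.trans (isMinOn_iff.mp hQmmin Q2 ⟨hf2, hd2⟩)
  have hmem : mutInfo (margAY (detQ P Qm)) ∈ {r | ∃ Q : (XA × XAc) × (XA × XAc) → ℝ,
      Feasible P Q ∧ expDist dErr Q ≤ Δ ∧ mutInfo (margAY Q) = r} :=
    ⟨detQ P Qm, hfeas', hdist', rfl⟩
  have hval : mutInfo (margAY (detQ P Qm)) = RAerr P Δ :=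
    le_antisymm (le_csInf ⟨_, hmem⟩ hlb)
      (csInf_le ⟨mutInfo (margAY (detQ P Qm)), fun r hr => hlb r hr⟩ hmem)
  refine ⟨detQ P Qm, hfeas', hdist', hval, ?_⟩
  intro x ya yac
  have hA : ∀ x : XA × XAc, ∑ y2, detQ P Qm (x, (ya, y2)) = ∑ y2, Qm (x, (ya, y2)) :=
    fun x => detQ_sum_yac P Qm x ya
  by_cases hc : yac = phiF P ya
  · have hL : detQ P Qm (x, (ya, yac)) = ∑ y2, Qm (x, (ya, y2)) := by simp [detQ, hc]
    have hR : ∀ x'' : XA × XAc, detQ P Qm (x'', (ya, yac))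
        = ∑ y2, Qm (x'', (ya, y2)) := fun x'' => by simp [detQ, hc]
    rw [hL, Finset.sum_congr rfl fun x'' (_ : x'' ∈ Finset.univ) => hA x'',
      Finset.sum_congr rfl fun x'' (_ : x'' ∈ Finset.univ) => hR x'', hA x]
  · have hL : detQ P Qm (x, (ya, yac)) = 0 := by simp [detQ, hc]
    have hR : ∀ x'' : XA × XAc, detQ P Qm (x'', (ya, yac)) = 0 := fun x'' => by
      simp [detQ, hc]
    rw [hL, Finset.sum_congr rfl fun x'' (_ : x'' ∈ Finset.univ) => hR x'']
    simp
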